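/- Let A be the n×n tridiagonal matrix A = L_2(ℓ_1) L_3(ℓ_2) ⋯ L_n(ℓ_{n−1}) D U_n(u_{n−1}) ⋯ U_3(u_2) U_2(u_1), where all ℓ_i, u_i > 0 and D is a diagonal matrix with positive diagonal entries. Then the (n,1) and (1,n) entries of A^{n−2} are zero; consequently the exponent of A equals n−1, i.e., A^{n−1} is totally positive but A^{n−2} is not. -/

import Mathlib

/-- A square real matrix is totally nonnegative if all its minors are nonnegative. -/
def TotallyNonneg {n : ℕ} (A : Matrix (Fin n) (Fin n) ℝ) : Prop :=
  ∀ (k : ℕ) (r c : Fin k → Fin n), StrictMono r → StrictMono c →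
    0 ≤ (A.submatrix r c).det

/-- A square real matrix is totally positive if all its minors are positive. -/
def TotallyPos {n : ℕ} (A : Matrix (Fin n) (Fin n) ℝ) : Prop :=
  ∀ (k : ℕ) (r c : Fin k → Fin n), StrictMono r → StrictMono c →
    0 < (A.submatrix r c).det

/-- The lower elementary bidiagonal matrix L_i(q) = I + q·E_{i,i−1} (1-indexed i). -/
def Lmat (n i : ℕ) (q : ℝ) : Matrix (Fin n) (Fin n) ℝ :=
  1 + Matrix.of fun a b : Fin n => if a.val + 1 = i ∧ b.val + 2 = i then q else 0

/-- The upper elementary bidiagonal matrix U_i(q) = I + q·E_{i−1,i} (1-indexed i). -/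
def Umat (n i : ℕ) (q : ℝ) : Matrix (Fin n) (Fin n) ℝ :=
  1 + Matrix.of fun a b : Fin n => if a.val + 2 = i ∧ b.val + 1 = i then q else 0

open Matrix Finset Equiv

theorem cauchy_binet {k n : ℕ} (P : Matrix (Fin k) (Fin n) ℝ) (Q : Matrix (Fin n) (Fin k) ℝ) :
    (P * Q).det = ∑ f ∈ univ.filter (fun f : Fin k → Fin n => StrictMono f),
      (P.submatrix id f).det * (Q.submatrix f id).det := by
  have step1 : (P * Q).det = ∑ p : Fin k → Fin n,
      (P.submatrix id p).det * ∏ i, Q (p i) i := by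
    calc (P * Q).det
        = ∑ p : Fin k → Fin n, ∑ σ : Perm (Fin k),
            ((Perm.sign σ : ℤ) : ℝ) * ∏ i, P (σ i) (p i) * Q (p i) i := by
          simp only [det_apply', mul_apply, prod_univ_sum, mul_sum, Fintype.piFinset_univ]
          rw [Finset.sum_comm]
      _ = _ := by
          refine Finset.sum_congr rfl fun p _ => ?_
          rw [det_apply', Finset.sum_mul]
          refine Finset.sum_congr rfl fun σ _ => ?_
          rw [Finset.prod_mul_distrib]
          simp [submatrix_apply, mul_assoc]
  rw [step1]
  rw [← Finset.sum_filter_add_sum_filter_not (s := univ)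
    (p := fun p : Fin k → Fin n => Function.Injective p)]
  have h2 : ∑ p ∈ univ.filter (fun p : Fin k → Fin n => ¬ Function.Injective p),
      (P.submatrix id p).det * ∏ i, Q (p i) i = 0 := by
    refine Finset.sum_eq_zero fun p hp => ?_
    rw [mem_filter] at hp
    simp only [Function.Injective] at hp
    push_neg at hp
    obtain ⟨i, j, hij, hne⟩ := hp.2
    rw [det_zero_of_column_eq hne (by simp [submatrix_apply, hij]), zero_mul]
  rw [h2, add_zero]
  have h3 : ∀ f ∈ univ.filter (fun f : Fin k → Fin n => StrictMono f),
      (P.submatrix id f).det * (Q.submatrix f id).det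
      = ∑ σ : Perm (Fin k), (P.submatrix id (f ∘ σ)).det * ∏ i, Q ((f ∘ σ) i) i := by
    intro f hf
    have hdq : (Q.submatrix f id).det
        = ∑ σ : Perm (Fin k), ((Perm.sign σ : ℤ) : ℝ) * ∏ i, Q (f (σ i)) i := by
      rw [det_apply']; rfl
    rw [hdq, Finset.mul_sum]
    refine Finset.sum_congr rfl fun σ _ => ?_
    have : P.submatrix id (f ∘ σ) = (P.submatrix id f).submatrix id σ := rfl
    rw [this, det_permute' σ (P.submatrix id f)]
    simp only [Function.comp_apply]
    ring
  rw [Finset.sum_congr rfl h3]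
  rw [← Finset.sum_product' (s := univ.filter (fun f : Fin k → Fin n => StrictMono f))
    (t := (univ : Finset (Perm (Fin k))))]
  refine Finset.sum_bij' (i := fun p _ => (p ∘ Tuple.sort p, (Tuple.sort p)⁻¹))
    (j := fun x _ => x.1 ∘ x.2) ?_ ?_ ?_ ?_ ?_
  · intro p hp
    simp only [mem_filter, mem_univ, true_and] at hp ⊢
    rw [Finset.mem_product]
    refine ⟨?_, Finset.mem_univ _⟩
    simp only [mem_filter, mem_univ, true_and]
    exact (Tuple.monotone_sort p).strictMono_of_injective (hp.comp (Equiv.injective _))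
  · intro x hx
    rw [Finset.mem_product] at hx
    simp only [mem_filter, mem_univ, true_and] at hx ⊢
    exact hx.1.injective.comp (Equiv.injective _)
  · intro p hp
    funext i
    simp
  · intro x hx
    rw [Finset.mem_product] at hx
    simp only [mem_filter, mem_univ, true_and] at hx
    obtain ⟨f, σ⟩ := x
    have hf : StrictMono f := hx.1
    set p : Fin k → Fin n := f ∘ σ with hpdef
    have h1 : p ∘ Tuple.sort p = f := by
      have hsm : StrictMono (p ∘ Tuple.sort p) :=
        (Tuple.monotone_sort p).strictMono_of_injective
          ((hf.injective.comp (Equiv.injective _)).comp (Equiv.injective _))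
      refine (StrictMono.range_inj hsm hf).mp ?_
      have : Set.range p = Set.range f := by
        rw [hpdef, Set.range_comp, Equiv.range_eq_univ, Set.image_univ]
      rw [Set.range_comp, Equiv.range_eq_univ, Set.image_univ, this]
    have h2 : (Tuple.sort p)⁻¹ = σ := by
      have key : ∀ i, σ (Tuple.sort p i) = i := by
        intro i
        have := congrFun h1 i
        simp only [Function.comp_apply, hpdef] at this
        exact hf.injective this
      ext i
      have h := key ((Tuple.sort p)⁻¹ i)
      rw [show Tuple.sort p ((Tuple.sort p)⁻¹ i) = i from (Tuple.sort p).apply_symm_apply i] at h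
      exact congrArg Fin.val h.symm
    simp only [Prod.mk.injEq]
    exact ⟨h1, h2⟩
  · intro p hp
    have : (p ∘ Tuple.sort p) ∘ ⇑(Tuple.sort p)⁻¹ = p := by funext i; simp
    rw [this]

theorem cb_submatrix {k n : ℕ} (M N : Matrix (Fin n) (Fin n) ℝ) (r c : Fin k → Fin n) :
    ((M * N).submatrix r c).det = ∑ f ∈ univ.filter (fun f : Fin k → Fin n => StrictMono f),
      (M.submatrix r f).det * (N.submatrix f c).det := by
  have h : (M * N).submatrix r c = (M.submatrix r id) * (N.submatrix id c) := by
    ext i j; simp [Matrix.mul_apply]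
  rw [h, cauchy_binet]
  refine Finset.sum_congr rfl fun f _ => ?_
  rw [Matrix.submatrix_submatrix, Matrix.submatrix_submatrix]
  simp [Function.comp_def]

theorem TotallyNonneg.mul {n : ℕ} {M N : Matrix (Fin n) (Fin n) ℝ}
    (hM : TotallyNonneg M) (hN : TotallyNonneg N) : TotallyNonneg (M * N) := by
  intro k r c hr hc
  rw [cb_submatrix]
  refine Finset.sum_nonneg fun f hf => ?_
  simp only [mem_filter, mem_univ, true_and] at hf
  exact mul_nonneg (hM k r f hr hf) (hN k f c hf hc)

theorem exists_inversion {k : ℕ} {σ : Perm (Fin k)} (hσ : σ ≠ 1) :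
    ∃ i j : Fin k, i < j ∧ σ j < σ i := by
  by_contra h
  push_neg at h
  have hmono : Monotone ⇑σ := by
    intro i j hij
    rcases eq_or_lt_of_le hij with rfl | h'
    · exact le_rfl
    · exact h i j h'
  have hsm : StrictMono ⇑σ := hmono.strictMono_of_injective σ.injective
  have heq : ⇑σ = id := by
    refine (StrictMono.range_inj hsm strictMono_id).mp ?_
    rw [Equiv.range_eq_univ, Set.range_id]
  exact hσ (Equiv.ext fun x => congrFun heq x)

theorem det_submatrix_lower {n k : ℕ} {M : Matrix (Fin n) (Fin n) ℝ}
    (hM : ∀ a b : Fin n, M a b ≠ 0 → b.val = a.val ∨ b.val + 1 = a.val)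
    {r c : Fin k → Fin n} (hr : StrictMono r) (hc : StrictMono c) :
    (M.submatrix r c).det = ∏ s, M (r s) (c s) := by
  rw [det_apply']
  rw [Finset.sum_eq_single (1 : Perm (Fin k))]
  · simp [submatrix_apply]
  · intro σ _ hσ
    obtain ⟨i, j, hij, hji⟩ := exists_inversion hσ
    have hz : ∏ t, (M.submatrix r c) (σ t) t = 0 := by
      by_contra hz
      have hfac : ∀ t : Fin k, M (r (σ t)) (c t) ≠ 0 := by
        intro t ht
        exact hz (Finset.prod_eq_zero (Finset.mem_univ t) ht)
      have h1 := hM _ _ (hfac i)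
      have h2 := hM _ _ (hfac j)
      have h3 : r (σ j) < r (σ i) := hr hji
      have h4 : c i < c j := hc hij
      rw [Fin.lt_iff_val_lt_val] at h3 h4
      omega
    rw [hz, mul_zero]
  · intro h; exact absurd (Finset.mem_univ 1) h

theorem det_submatrix_upper {n k : ℕ} {M : Matrix (Fin n) (Fin n) ℝ}
    (hM : ∀ a b : Fin n, M a b ≠ 0 → a.val = b.val ∨ a.val + 1 = b.val)
    {r c : Fin k → Fin n} (hr : StrictMono r) (hc : StrictMono c) :
    (M.submatrix r c).det = ∏ s, M (r s) (c s) := by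
  rw [← Matrix.det_transpose, Matrix.transpose_submatrix]
  have := det_submatrix_lower (M := Mᵀ) (fun a b h => hM b a h) hc hr
  rw [this]
  rfl

theorem tn_of_lower {n : ℕ} {M : Matrix (Fin n) (Fin n) ℝ}
    (h0 : ∀ a b : Fin n, 0 ≤ M a b)
    (hM : ∀ a b : Fin n, M a b ≠ 0 → b.val = a.val ∨ b.val + 1 = a.val) :
    TotallyNonneg M := fun k r c hr hc => by
  rw [det_submatrix_lower hM hr hc]
  exact Finset.prod_nonneg fun _ _ => h0 _ _

theorem tn_of_upper {n : ℕ} {M : Matrix (Fin n) (Fin n) ℝ}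
    (h0 : ∀ a b : Fin n, 0 ≤ M a b)
    (hM : ∀ a b : Fin n, M a b ≠ 0 → a.val = b.val ∨ a.val + 1 = b.val) :
    TotallyNonneg M := fun k r c hr hc => by
  rw [det_submatrix_upper hM hr hc]
  exact Finset.prod_nonneg fun _ _ => h0 _ _

/-- The product of the first `m` lower elementary factors. -/
def lowFull (n m : ℕ) (g : ℕ → ℝ) : Matrix (Fin n) (Fin n) ℝ :=
  Matrix.of fun a b => if a = b then 1 else
    if b.val + 1 = a.val ∧ b.val < m then g b.val else 0

/-- The product of the first `m` upper elementary factors. -/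
def upFull (n m : ℕ) (g : ℕ → ℝ) : Matrix (Fin n) (Fin n) ℝ :=
  Matrix.of fun a b => if a = b then 1 else
    if a.val + 1 = b.val ∧ n - 1 - m ≤ a.val then g (n - a.val - 2) else 0

theorem mul_stdBasis {n : ℕ} (M : Matrix (Fin n) (Fin n) ℝ) (i0 j0 : Fin n) (q : ℝ) :
    M * Matrix.single i0 j0 q = Matrix.of fun a b => if b = j0 then M a i0 * q else 0 := by
  ext a b
  simp only [Matrix.mul_apply, Matrix.single, Matrix.of_apply, mul_ite, mul_zero,
    ite_and]
  rw [Finset.sum_ite_eq]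
  simp [eq_comm]

theorem Lmat_eq (n m : ℕ) (hm : m + 2 ≤ n) (q : ℝ) :
    Lmat n (m + 2) q
      = 1 + Matrix.single (⟨m + 1, by omega⟩ : Fin n) (⟨m, by omega⟩ : Fin n) q := by
  unfold Lmat
  congr 1
  ext a b
  simp only [Matrix.of_apply, Matrix.single]
  refine if_congr ?_ rfl rfl
  simp only [Fin.ext_iff]
  omega

theorem Umat_eq (n m : ℕ) (hm : m + 2 ≤ n) (q : ℝ) :
    Umat n (n - m) q
      = 1 + Matrix.single (⟨n - m - 2, by omega⟩ : Fin n)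
          (⟨n - m - 1, by omega⟩ : Fin n) q := by
  unfold Umat
  congr 1
  ext a b
  simp only [Matrix.of_apply, Matrix.single]
  refine if_congr ?_ rfl rfl
  simp only [Fin.ext_iff]
  omega

theorem low_step (n m : ℕ) (g : ℕ → ℝ) (hm : m + 2 ≤ n) :
    lowFull n m g * Lmat n (m + 2) (g m) = lowFull n (m + 1) g := by
  rw [Lmat_eq n m hm, mul_add, mul_one, mul_stdBasis]
  ext a b
  rcases a with ⟨a, ha⟩
  rcases b with ⟨b, hb⟩
  simp only [Matrix.add_apply, Matrix.of_apply, lowFull, Fin.mk.injEq, Fin.ext_iff]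
  split_ifs <;>
    first
      | rfl
      | (exfalso; omega)
      | (subst_vars; first | ring1 | (exfalso; omega))
      | ring1

theorem up_step (n m : ℕ) (g : ℕ → ℝ) (hm : m + 2 ≤ n) :
    upFull n m g * Umat n (n - m) (g m) = upFull n (m + 1) g := by
  rw [Umat_eq n m hm, mul_add, mul_one, mul_stdBasis]
  ext a b
  rcases a with ⟨a, ha⟩
  rcases b with ⟨b, hb⟩
  simp only [Matrix.add_apply, Matrix.of_apply, upFull, Fin.mk.injEq, Fin.ext_iff]
  split_ifs <;>
    first
      | rfl
      | (exfalso; omega)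
      | (rw [show n - a - 2 = m by omega]; ring1)
      | (subst_vars; first | ring1 | (exfalso; omega))
      | ring1

theorem low_prod (n : ℕ) (g : ℕ → ℝ) :
    ∀ m, m + 1 ≤ n →
      (List.ofFn fun j : Fin m => Lmat n (j.val + 2) (g j.val)).prod = lowFull n m g := by
  intro m
  induction m with
  | zero =>
      intro _
      ext a b
      simp only [List.ofFn_zero, List.prod_nil, lowFull, Matrix.of_apply, Matrix.one_apply]
      split_ifs with h1 h2
      · rfl
      · exfalso; omega
      · rfl
  | succ m ih =>
      intro h
      rw [List.ofFn_succ']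
      rw [List.prod_concat]
      simp only [Fin.coe_castSucc, Fin.val_last]
      rw [ih (by omega)]
      exact low_step n m g (by omega)

theorem up_prod (n : ℕ) (g : ℕ → ℝ) :
    ∀ m, m + 1 ≤ n →
      (List.ofFn fun j : Fin m => Umat n (n - j.val) (g j.val)).prod = upFull n m g := by
  intro m
  induction m with
  | zero =>
      intro _
      ext a b
      simp only [List.ofFn_zero, List.prod_nil, upFull, Matrix.of_apply, Matrix.one_apply]
      split_ifs with h1 h2
      · rfl
      · exfalso; have := b.isLt; omega
      · rfl
  | succ m ih =>
      intro h
      rw [List.ofFn_succ']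
      rw [List.prod_concat]
      simp only [Fin.coe_castSucc, Fin.val_last]
      rw [ih (by omega)]
      exact up_step n m g (by omega)

theorem stmt13 {n : ℕ} (hn : 2 ≤ n) (ℓ u : Fin (n - 1) → ℝ) (dd : Fin n → ℝ)
    (hℓ : ∀ j, 0 < ℓ j) (hu : ∀ j, 0 < u j) (hdd : ∀ i, 0 < dd i)
    (A : Matrix (Fin n) (Fin n) ℝ)
    (hA : A = (List.ofFn fun j : Fin (n - 1) => Lmat n (j.val + 2) (ℓ j)).prod *
        Matrix.diagonal dd *
        (List.ofFn fun j : Fin (n - 1) => Umat n (n - j.val) (u j)).prod) :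
    (A ^ (n - 2)) ⟨n - 1, by omega⟩ ⟨0, by omega⟩ = 0 ∧
    (A ^ (n - 2)) ⟨0, by omega⟩ ⟨n - 1, by omega⟩ = 0 ∧
    IsLeast {r : ℕ | 0 < r ∧ TotallyPos (A ^ r)} (n - 1) := by
  classical
  set gl : ℕ → ℝ := fun j => if h : j < n - 1 then ℓ ⟨j, h⟩ else 1 with hgl_def
  set gu : ℕ → ℝ := fun j => if h : j < n - 1 then u ⟨j, h⟩ else 1 with hgu_def
  have hglpos : ∀ j, 0 < gl j := by
    intro j
    simp only [hgl_def]
    split_ifs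
    · exact hℓ _
    · exact one_pos
  have hgupos : ∀ j, 0 < gu j := by
    intro j
    simp only [hgu_def]
    split_ifs
    · exact hu _
    · exact one_pos
  have hA2 : A = (lowFull n (n - 1) gl * Matrix.diagonal dd) * upFull n (n - 1) gu := by
    rw [hA]
    have e1 : (List.ofFn fun j : Fin (n - 1) => Lmat n (j.val + 2) (ℓ j))
        = List.ofFn fun j : Fin (n - 1) => Lmat n (j.val + 2) (gl j.val) := by
      refine congrArg _ (funext fun j => ?_)
      simp only [hgl_def]
      rw [dif_pos j.isLt]
    have e2 : (List.ofFn fun j : Fin (n - 1) => Umat n (n - j.val) (u j))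
        = List.ofFn fun j : Fin (n - 1) => Umat n (n - j.val) (gu j.val) := by
      refine congrArg _ (funext fun j => ?_)
      simp only [hgu_def]
      rw [dif_pos j.isLt]
    rw [e1, e2, low_prod n gl (n - 1) (by omega), up_prod n gu (n - 1) (by omega)]
  have hLs : ∀ a b : Fin n, (lowFull n (n - 1) gl * Matrix.diagonal dd) a b ≠ 0 →
      b.val = a.val ∨ b.val + 1 = a.val := by
    intro a b h
    rw [Matrix.mul_diagonal] at h
    have h' : lowFull n (n - 1) gl a b ≠ 0 := fun hz => h (by rw [hz, zero_mul])
    simp only [lowFull, Matrix.of_apply] at h'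
    split_ifs at h' with h1 h2
    · left; rw [h1]
    · right; exact h2.1
    · exact absurd rfl h'
  have hUs : ∀ a b : Fin n, upFull n (n - 1) gu a b ≠ 0 →
      a.val = b.val ∨ a.val + 1 = b.val := by
    intro a b h
    simp only [upFull, Matrix.of_apply] at h
    split_ifs at h with h1 h2
    · left; rw [h1]
    · right; exact h2.1
    · exact absurd rfl h
  have hLDnn : ∀ a b : Fin n, 0 ≤ (lowFull n (n - 1) gl * Matrix.diagonal dd) a b := by
    intro a b
    rw [Matrix.mul_diagonal]
    refine mul_nonneg ?_ (hdd b).le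
    simp only [lowFull, Matrix.of_apply]
    split_ifs
    · exact zero_le_one
    · exact (hglpos _).le
    · exact le_refl 0
  have hUnn : ∀ a b : Fin n, 0 ≤ upFull n (n - 1) gu a b := by
    intro a b
    simp only [upFull, Matrix.of_apply]
    split_ifs
    · exact zero_le_one
    · exact (hgupos _).le
    · exact le_refl 0
  have hTNLD : TotallyNonneg (lowFull n (n - 1) gl * Matrix.diagonal dd) :=
    tn_of_lower hLDnn hLs
  have hTNU : TotallyNonneg (upFull n (n - 1) gu) := tn_of_upper hUnn hUs
  have hTNA : TotallyNonneg A := by rw [hA2]; exact hTNLD.mul hTNU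
  have hTNpow : ∀ m, TotallyNonneg (A ^ m) := by
    intro m
    induction m with
    | zero =>
        rw [pow_zero]
        refine tn_of_lower (fun a b => ?_) (fun a b h => ?_)
        · rw [Matrix.one_apply]; split_ifs; exacts [zero_le_one, le_refl 0]
        · have : a = b := by by_contra hne; exact h (Matrix.one_apply_ne hne)
          left; rw [this]
    | succ m ih => rw [pow_succ]; exact ih.mul hTNA
  have hLDpos : ∀ a b : Fin n, (b.val = a.val ∨ b.val + 1 = a.val) →
      0 < (lowFull n (n - 1) gl * Matrix.diagonal dd) a b := by
    intro a b hb
    rw [Matrix.mul_diagonal]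
    refine mul_pos ?_ (hdd b)
    simp only [lowFull, Matrix.of_apply]
    rcases hb with h | h
    · rw [if_pos (Fin.ext h.symm)]; exact one_pos
    · have hne : ¬ a = b := fun hh => by rw [hh] at h; omega
      rw [if_neg hne, if_pos ⟨h, by have := a.isLt; omega⟩]
      exact hglpos _
  have hUpos : ∀ a b : Fin n, (a.val = b.val ∨ a.val + 1 = b.val) →
      0 < upFull n (n - 1) gu a b := by
    intro a b hb
    simp only [upFull, Matrix.of_apply]
    rcases hb with h | h
    · rw [if_pos (Fin.ext h)]; exact one_pos
    · have hne : ¬ a = b := fun hh => by rw [hh] at h; omega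
      rw [if_neg hne, if_pos ⟨h, by omega⟩]
      exact hgupos _
  have hkey : ∀ (k : ℕ) (p q : Fin k → Fin n), StrictMono p → StrictMono q →
      (∀ s, (p s).val ≤ (q s).val + 1 ∧ (q s).val ≤ (p s).val + 1) →
      0 < (A.submatrix p q).det := by
    intro k p q hp hq hpq
    rw [hA2, cb_submatrix]
    set mf : Fin k → Fin n :=
      fun s => ⟨min (p s).val (q s).val, by have := (p s).isLt; omega⟩ with hmf
    have hmfmono : StrictMono mf := by
      intro s t hst
      have h1 := hp hst
      have h2 := hq hst
      rw [Fin.lt_iff_val_lt_val] at h1 h2 ⊢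
      simp only [hmf]
      omega
    refine Finset.sum_pos' (fun f hf => ?_)
      ⟨mf, Finset.mem_filter.mpr ⟨Finset.mem_univ _, hmfmono⟩, ?_⟩
    · have hff : StrictMono f := (Finset.mem_filter.mp hf).2
      exact mul_nonneg (hTNLD k p f hp hff) (hTNU k f q hff hq)
    · refine mul_pos ?_ ?_
      · rw [det_submatrix_lower hLs hp hmfmono]
        refine Finset.prod_pos fun s _ => hLDpos _ _ ?_
        have := hpq s
        simp only [hmf]
        omega
      · rw [det_submatrix_upper hUs hmfmono hq]
        refine Finset.prod_pos fun s _ => hUpos _ _ ?_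
        have := hpq s
        simp only [hmf]
        omega
  have hband : ∀ a b : Fin n, (b.val + 1 < a.val ∨ a.val + 1 < b.val) → A a b = 0 := by
    intro a b hab
    rw [hA2, Matrix.mul_apply]
    refine Finset.sum_eq_zero fun c _ => ?_
    by_cases h1 : (lowFull n (n - 1) gl * Matrix.diagonal dd) a c = 0
    · rw [h1, zero_mul]
    · have hc := hLs a c h1
      have h2 : upFull n (n - 1) gu c b = 0 := by
        by_contra h2
        have := hUs c b h2
        omega
      rw [h2, mul_zero]
  have hbandpow : ∀ (m : ℕ) (a b : Fin n),
      (b.val + m < a.val ∨ a.val + m < b.val) → (A ^ m) a b = 0 := by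
    intro m
    induction m with
    | zero =>
        intro a b h
        rw [pow_zero]
        exact Matrix.one_apply_ne (fun hh => by rw [hh] at h; omega)
    | succ m ih =>
        intro a b h
        rw [pow_succ, Matrix.mul_apply]
        refine Finset.sum_eq_zero fun c _ => ?_
        by_cases h1 : (A ^ m) a c = 0
        · rw [h1, zero_mul]
        · have hc : ¬(c.val + m < a.val ∨ a.val + m < c.val) := fun hc => h1 (ih a c hc)
          push_neg at hc
          rw [hband c b (by omega), mul_zero]
  have hchain : TotallyPos (A ^ (n - 1)) := by
    intro k p q hp hq
    have hlt : ∀ (t : ℕ) (s : Fin k),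
        max (min (q s).val ((p s).val + t)) ((p s).val - t) < n := by
      intro t s
      have := (q s).isLt
      have := (p s).isLt
      omega
    set ch : ℕ → Fin k → Fin n := fun t s => ⟨_, hlt t s⟩ with hch
    have hchmono : ∀ t, StrictMono (ch t) := by
      intro t s s' hss
      have h1 := hp hss
      have h2 := hq hss
      rw [Fin.lt_iff_val_lt_val] at h1 h2 ⊢
      simp only [hch]
      omega
    have hstep : ∀ t, 0 < ((A ^ t).submatrix p (ch t)).det := by
      intro t
      induction t with
      | zero =>
          have hch0 : ch 0 = p := funext fun s => Fin.ext (by simp only [hch]; omega)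
          rw [pow_zero, hch0]
          rw [det_submatrix_lower (M := (1 : Matrix (Fin n) (Fin n) ℝ)) (fun a b h => by
            have : a = b := by by_contra hne; exact h (Matrix.one_apply_ne hne)
            left; rw [this]) hp hp]
          refine Finset.prod_pos fun s _ => ?_
          rw [Matrix.one_apply_eq]
          exact one_pos
      | succ t ih =>
          rw [pow_succ, cb_submatrix]
          refine Finset.sum_pos' (fun f hf => ?_)
            ⟨ch t, Finset.mem_filter.mpr ⟨Finset.mem_univ _, hchmono t⟩, ?_⟩
          · have hff := (Finset.mem_filter.mp hf).2
            exact mul_nonneg (hTNpow t k p f hp hff) (hTNA k f (ch (t + 1)) hff (hchmono _))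
          · refine mul_pos ih (hkey k (ch t) (ch (t + 1)) (hchmono t) (hchmono (t + 1))
              fun s => ?_)
            simp only [hch]
            constructor <;> omega
    have hfin : ch (n - 1) = q := funext fun s => Fin.ext (by
      have := (q s).isLt
      have := (p s).isLt
      simp only [hch]
      omega)
    have := hstep (n - 1)
    rwa [hfin] at this
  refine ⟨hbandpow (n - 2) _ _ (Or.inl (by simp only; omega)),
    hbandpow (n - 2) _ _ (Or.inr (by simp only; omega)), ⟨⟨by omega, hchain⟩, ?_⟩⟩
  intro r hr
  obtain ⟨hr0, hrTP⟩ := hr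
  by_contra hcon
  push_neg at hcon
  have h1 := hrTP 1 (fun _ => (⟨n - 1, by omega⟩ : Fin n)) (fun _ => (⟨0, by omega⟩ : Fin n))
    (Subsingleton.strictMono _) (Subsingleton.strictMono _)
  rw [Matrix.det_fin_one, Matrix.submatrix_apply] at h1
  rw [hbandpow r _ _ (Or.inl (by simp only; omega))] at h1
  exact lt_irrefl 0 h1
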